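/- Let L be a positive definite integral lattice of squarefree discriminant d. Then for any vector v in the dual lattice L^# that is not in L, Q(v) lies in (1/d)ℤ but not in ℤ. -/

import Mathlib

open Matrix

/-- Square integer matrices of size `n`, used as Gram matrices of lattices. -/
abbrev Mat (n : ℕ) := Matrix (Fin n) (Fin n) ℤ

/-- `G` is the Gram matrix of a positive definite integral lattice:
it is symmetric and `vᵀ G v > 0` for every nonzero integer vector `v`. -/
def PosDefInt {n : ℕ} (G : Mat n) : Prop :=
  G.IsSymm ∧ ∀ v : Fin n → ℤ, v ≠ 0 → 0 < v ⬝ᵥ G.mulVec v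

/-- The lattice with Gram matrix `L` represents the lattice with Gram matrix `N`:
there is an integral matrix `T` (whose rows are the coordinates of the images of
the basis vectors) with `T L Tᵀ = N`. -/
def Represents {m n : ℕ} (L : Mat m) (N : Mat n) : Prop :=
  ∃ T : Matrix (Fin n) (Fin m) ℤ, T * L * T.transpose = N

/-- Isometry of (positive definite) lattices, expressed as mutual representation. -/
def Isom {m n : ℕ} (A : Mat m) (B : Mat n) : Prop :=
  Represents A B ∧ Represents B A

theorem Represents.rfl' {n : ℕ} (A : Mat n) : Represents A A :=
  ⟨1, by simp⟩

theorem Represents.trans' {a b c : ℕ} {A : Mat a} {B : Mat b} {C : Mat c}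
    (h1 : Represents A B) (h2 : Represents B C) : Represents A C := by
  obtain ⟨T1, h1⟩ := h1
  obtain ⟨T2, h2⟩ := h2
  refine ⟨T2 * T1, ?_⟩
  rw [← h2, ← h1]
  simp [Matrix.mul_assoc, Matrix.transpose_mul]

/-- A positive definite integral lattice of rank `n`, given by a Gram matrix. -/
def QLat (n : ℕ) := {G : Mat n // PosDefInt G}

instance latSetoid (n : ℕ) : Setoid (QLat n) where
  r A B := Isom A.1 B.1
  iseqv := ⟨fun A => ⟨Represents.rfl' _, Represents.rfl' _⟩,
    fun h => ⟨h.2, h.1⟩,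
    fun h1 h2 => ⟨h1.1.trans' h2.1, h2.2.trans' h1.2⟩⟩

/-- Isometry classes of positive definite integral lattices of rank `n` (`Φ_n`). -/
def Cls (n : ℕ) := Quotient (latSetoid n)

/-- The isometry class of a lattice. -/
def cls {n : ℕ} (L : QLat n) : Cls n := Quotient.mk _ L

/-- A lattice represents an isometry class. -/
def RepCls {m n : ℕ} (L : QLat m) (c : Cls n) : Prop :=
  ∃ N : QLat n, cls N = c ∧ Represents L.1 N.1

/-- The `n`-exceptional set of `L`: the classes of rank-`n` positive definite
integral lattices not represented by `L`. -/
def ExcSet (n : ℕ) {m : ℕ} (L : QLat m) : Set (Cls n) :=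
  {c : Cls n | ¬ RepCls L c}
/-- The quadratic form of the lattice with Gram matrix `G`, evaluated on a rational
coordinate vector. -/
def QformQ {n : ℕ} (G : Mat n) (v : Fin n → ℚ) : ℚ :=
  v ⬝ᵥ (G.map (Int.cast : ℤ → ℚ)).mulVec v

/-- `v` (a rational coordinate vector) lies in the dual lattice `L^#`:
its inner product with every lattice vector is an integer. -/
def InDual {n : ℕ} (G : Mat n) (v : Fin n → ℚ) : Prop :=
  ∀ i, ∃ m : ℤ, (G.map (Int.cast : ℤ → ℚ)).mulVec v i = m


section Aux

private lemma one_row_single {n : ℕ} (j : Fin n) :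
    (1 : Matrix (Fin n) (Fin n) ℚ) j = Pi.single j 1 := by
  funext t
  simp [Matrix.one_apply, Pi.single_apply, eq_comm]

private lemma mul_mul_transpose_apply {n : ℕ} (U G : Matrix (Fin n) (Fin n) ℚ)
    (j k : Fin n) : (U * G * Uᵀ) j k = U j ⬝ᵥ (G *ᵥ U k) := by
  simp only [Matrix.mul_assoc, Matrix.mul_apply, Matrix.mulVec, dotProduct,
    Matrix.transpose_apply, Finset.sum_mul, Finset.mul_sum]
  rw [Finset.sum_comm]
  simp only [mul_assoc]

private lemma det_cast {n : ℕ} (M : Matrix (Fin n) (Fin n) ℤ) :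
    (M.map (Int.cast : ℤ → ℚ)).det = ((M.det : ℤ) : ℚ) := by
  rw [show M.map (Int.cast : ℤ → ℚ) = (Int.castRingHom ℚ).mapMatrix M from rfl,
    ← RingHom.map_det]
  rfl

end Aux

/-- If `L` is a positive definite integral lattice with squarefree
discriminant `d`, then for every `v ∈ L^# \\ L` we have `Q(v) ∈ (1/d)ℤ \\ ℤ`. -/
theorem dual_norm_of_squarefree_disc (n : ℕ) (L : QLat n) (hd : Squarefree L.1.det)
    (v : Fin n → ℚ) (hv : InDual L.1 v) (hvL : ¬ ∀ i, ∃ m : ℤ, v i = m) :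
    (∃ m : ℤ, (L.1.det : ℚ) * QformQ L.1 v = m) ∧ ¬ ∃ m : ℤ, QformQ L.1 v = m := by
  classical
  have Gsymm : L.1ᵀ = L.1 := L.2.1
  set G : Mat n := L.1 with hG
  set Gq : Matrix (Fin n) (Fin n) ℚ := G.map (Int.cast : ℤ → ℚ) with hGq
  have hv' : ∀ i, ∃ m : ℤ, Gq.mulVec v i = m := hv
  choose w hw using hv'
  have hw' : Gq *ᵥ v = fun j => (w j : ℚ) := funext hw
  have hGqs : Gqᵀ = Gq := by
    rw [hGq, ← Matrix.transpose_map, Gsymm]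
  have hsy : ∀ x y : Fin n → ℚ, x ⬝ᵥ (Gq *ᵥ y) = (Gq *ᵥ x) ⬝ᵥ y := by
    intro x y
    rw [Matrix.dotProduct_mulVec, ← Matrix.vecMul_transpose, hGqs]
  have hdet : Gq.det = (G.det : ℚ) := det_cast G
  have hadj : (Matrix.adjugate G).map (Int.cast : ℤ → ℚ) = Matrix.adjugate Gq := by
    rw [hGq]
    exact RingHom.map_adjugate (Int.castRingHom ℚ) G
  have key : ∀ s, (G.det : ℚ) * v s = ((Matrix.adjugate G *ᵥ w) s : ℚ) := by
    intro s
    have h2 : Matrix.adjugate Gq *ᵥ (Gq *ᵥ v) = (G.det : ℚ) • v := by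
      rw [Matrix.mulVec_mulVec, Matrix.adjugate_mul, hdet, Matrix.smul_mulVec,
        Matrix.one_mulVec]
    rw [hw'] at h2
    calc (G.det : ℚ) * v s = ((G.det : ℚ) • v) s := rfl
      _ = (Matrix.adjugate Gq *ᵥ fun j => (w j : ℚ)) s := by rw [h2]
      _ = ((Matrix.adjugate G *ᵥ w) s : ℚ) := by
          rw [← hadj]
          simp only [Matrix.mulVec, dotProduct, Matrix.map_apply]
          push_cast
          rfl
  have hQ : QformQ G v = v ⬝ᵥ fun j => (w j : ℚ) := by
    simp only [QformQ, ← hGq, hw']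
  constructor
  · refine ⟨(Matrix.adjugate G *ᵥ w) ⬝ᵥ w, ?_⟩
    rw [hQ, dotProduct, dotProduct, Finset.mul_sum]
    push_cast
    refine Finset.sum_congr rfl fun s _ => ?_
    rw [← mul_assoc]; exact_mod_cast congrArg (· * (w s : ℚ)) (key s)
  · rintro ⟨q, hq⟩
    rw [hQ] at hq
    have hvGv : v ⬝ᵥ (Gq *ᵥ v) = (q : ℚ) := by rw [hw']; exact hq
    have hex : ∃ kk : ℕ, 0 < kk ∧ ∀ j, ∃ m : ℤ, (kk : ℚ) * v j = m := by
      refine ⟨G.det.natAbs, Int.natAbs_pos.mpr hd.ne_zero, fun j => ?_⟩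
      rcases Int.natAbs_eq G.det with h | h
      · refine ⟨(Matrix.adjugate G *ᵥ w) j, ?_⟩
        have h3 : (G.det.natAbs : ℤ) = G.det := by omega
        calc ((G.det.natAbs : ℕ) : ℚ) * v j = ((G.det.natAbs : ℤ) : ℚ) * v j := by
              rw [Int.cast_natCast]
          _ = (G.det : ℚ) * v j := by rw [h3]
          _ = _ := key j
      · refine ⟨-((Matrix.adjugate G *ᵥ w) j), ?_⟩
        have h3 : (G.det.natAbs : ℤ) = -G.det := by omega
        have h4 : ((G.det.natAbs : ℤ) : ℚ) = -(G.det : ℚ) := by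
          rw [h3]; push_cast; ring
        calc ((G.det.natAbs : ℕ) : ℚ) * v j = ((G.det.natAbs : ℤ) : ℚ) * v j := by
              rw [Int.cast_natCast]
          _ = -((G.det : ℚ) * v j) := by rw [h4]; ring
          _ = -(((Matrix.adjugate G *ᵥ w) j : ℤ) : ℚ) := by rw [key j]
          _ = _ := by push_cast; ring
    set e := Nat.find hex with he_def
    obtain ⟨hepos, he⟩ := Nat.find_spec hex
    rw [← he_def] at hepos he
    have he1 : e ≠ 1 := by
      intro h1
      apply hvL
      intro j
      obtain ⟨m, hm⟩ := he j
      exact ⟨m, by rwa [h1, Nat.cast_one, one_mul] at hm⟩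
    set p := e.minFac with hp_def
    have pp : p.Prime := Nat.minFac_prime he1
    have hpd : p ∣ e := Nat.minFac_dvd e
    set f := e / p with hf_def
    have hp0 : (p : ℚ) ≠ 0 := Nat.cast_ne_zero.mpr pp.ne_zero
    have hfp : (f : ℚ) * p = e := by exact_mod_cast Nat.div_mul_cancel hpd
    have hfpos : 0 < f := Nat.div_pos (Nat.minFac_le hepos) pp.pos
    have hflt : f < e := Nat.div_lt_self hepos pp.one_lt
    obtain ⟨u, hu_def⟩ : ∃ u : Fin n → ℚ, u = (f : ℚ) • v := ⟨_, rfl⟩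
    have hu_pu : ∀ j, ∃ m : ℤ, (p : ℚ) * u j = m := by
      intro j
      obtain ⟨m, hm⟩ := he j
      refine ⟨m, ?_⟩
      rw [hu_def]
      simp only [Pi.smul_apply, smul_eq_mul]
      rw [← hm, ← mul_assoc, mul_comm (p : ℚ), hfp]
    have hu_ni : ∃ j, ¬∃ m : ℤ, u j = m := by
      by_contra hcon
      push_neg at hcon
      refine Nat.find_min hex hflt ⟨hfpos, fun j => ?_⟩
      obtain ⟨m, hm⟩ := hcon j
      exact ⟨m, by rw [← hm, hu_def]; rfl⟩
    obtain ⟨i, hi⟩ := hu_ni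
    obtain ⟨c, hc⟩ := hu_pu i
    have hpc : ¬((p : ℤ) ∣ c) := by
      rintro ⟨m, rfl⟩
      apply hi
      refine ⟨m, ?_⟩
      have h2 : (p : ℚ) * u i = (p : ℚ) * (m : ℚ) := by rw [hc]; push_cast; ring
      exact mul_left_cancel₀ hp0 h2
    have hcop : IsCoprime ((p : ℕ) : ℤ) c :=
      ((Nat.prime_iff_prime_int.mp pp).coprime_iff_not_dvd).mpr hpc
    obtain ⟨l, k, hlk⟩ := hcop
    obtain ⟨u', hu'_def⟩ : ∃ u' : Fin n → ℚ,
        u' = (k : ℚ) • u + (l : ℚ) • (Pi.single i 1 : Fin n → ℚ) := ⟨_, rfl⟩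
    have hui' : u i = (c : ℚ) / p := by
      field_simp
      rw [mul_comm]
      exact hc
    have hui : u' i = 1 / p := by
      rw [hu'_def]
      simp only [Pi.add_apply, Pi.smul_apply, Pi.single_eq_same, smul_eq_mul, mul_one]
      rw [hui']
      have hlk' : (l : ℚ) * p + k * c = 1 := by exact_mod_cast hlk
      field_simp
      linarith [hlk']
    have hGu : Gq *ᵥ u = fun j => (f : ℚ) * (w j) := by
      rw [hu_def, Matrix.mulVec_smul, hw']
      funext j
      simp
    have hGe : Gq *ᵥ Pi.single i 1 = fun j => Gq j i := by
      rw [Matrix.mulVec_single]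
      funext j
      simp
    obtain ⟨g, hg_def⟩ : ∃ g : Fin n → ℤ,
        g = fun j => k * ((f : ℤ) * w j) + l * G j i := ⟨_, rfl⟩
    have hGu' : Gq *ᵥ u' = fun j => ((g j : ℤ) : ℚ) := by
      rw [hu'_def, Matrix.mulVec_add, Matrix.mulVec_smul, Matrix.mulVec_smul, hGu, hGe]
      funext j
      simp only [Pi.add_apply, Pi.smul_apply, smul_eq_mul, hg_def, hGq, Matrix.map_apply]
      push_cast
      ring
    have t1 : u ⬝ᵥ (Gq *ᵥ u) = (f : ℚ) * (f : ℚ) * q := by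
      rw [hu_def, smul_dotProduct, Matrix.mulVec_smul, dotProduct_smul, hvGv]
      simp [mul_assoc]
    have t2 : u ⬝ᵥ (Gq *ᵥ Pi.single i 1) = (f : ℚ) * w i := by
      rw [hsy, hGu, dotProduct_single]
      simp
    have t3 : (Pi.single i 1 : Fin n → ℚ) ⬝ᵥ (Gq *ᵥ u) = (f : ℚ) * w i := by
      rw [hGu, single_dotProduct]
      simp
    have t4 : (Pi.single i 1 : Fin n → ℚ) ⬝ᵥ (Gq *ᵥ Pi.single i 1) = ((G i i : ℤ) : ℚ) := by
      rw [hGe, single_dotProduct]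
      simp [hGq, Matrix.map_apply]
    obtain ⟨z, hz_def⟩ : ∃ z : ℤ, z = k * k * ((f : ℤ) * (f : ℤ) * q) + k * l * ((f : ℤ) * w i)
        + l * k * ((f : ℤ) * w i) + l * l * G i i := ⟨_, rfl⟩
    have hquz : u' ⬝ᵥ (Gq *ᵥ u') = (z : ℚ) := by
      have expand : u' ⬝ᵥ (Gq *ᵥ u') =
          (k : ℚ) * ((k : ℚ) * (u ⬝ᵥ (Gq *ᵥ u)) + (l : ℚ) * (u ⬝ᵥ (Gq *ᵥ Pi.single i 1)))
          + (l : ℚ) * ((k : ℚ) * ((Pi.single i 1 : Fin n → ℚ) ⬝ᵥ (Gq *ᵥ u))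
            + (l : ℚ) * ((Pi.single i 1 : Fin n → ℚ) ⬝ᵥ (Gq *ᵥ Pi.single i 1))) := by
        rw [hu'_def, Matrix.mulVec_add, Matrix.mulVec_smul, Matrix.mulVec_smul]
        simp only [add_dotProduct, dotProduct_add, smul_dotProduct,
          dotProduct_smul, smul_eq_mul]
        ring
      rw [expand, t1, t2, t3, t4, hz_def]
      push_cast
      ring
    obtain ⟨U, hU_def⟩ : ∃ U : Matrix (Fin n) (Fin n) ℚ,
        U = (1 : Matrix (Fin n) (Fin n) ℚ).updateRow i u' := ⟨_, rfl⟩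
    have hrowi : U i = u' := by rw [hU_def]; exact Matrix.updateRow_self
    have hrow : ∀ j, j ≠ i → U j = Pi.single j (1 : ℚ) := fun j hj => by
      rw [hU_def, Matrix.updateRow_ne hj, one_row_single]
    have hdetU : U.det = 1 / p := by
      have hsum : (∑ t, u' t • (1 : Matrix (Fin n) (Fin n) ℚ) t) = u' := by
        funext s
        simp [Matrix.one_apply, Finset.sum_ite_eq', Pi.single_apply]
      calc U.det
          = ((1 : Matrix (Fin n) (Fin n) ℚ).updateRow i u').det := by rw [hU_def]
        _ = ((1 : Matrix (Fin n) (Fin n) ℚ).updateRow i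
              (∑ t, u' t • (1 : Matrix (Fin n) (Fin n) ℚ) t)).det := by rw [hsum]
        _ = u' i • (1 : Matrix (Fin n) (Fin n) ℚ).det := Matrix.det_updateRow_sum _ i u'
        _ = 1 / p := by rw [Matrix.det_one, hui, smul_eq_mul, mul_one]
    obtain ⟨H, hH_def⟩ : ∃ H : Mat n, H = fun j k' => if j = i then (if k' = i then z else g k')
        else (if k' = i then g j else G j k') := ⟨_, rfl⟩
    have hHmap : H.map (Int.cast : ℤ → ℚ) = U * Gq * Uᵀ := by
      funext j k'
      rw [Matrix.map_apply, mul_mul_transpose_apply]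
      by_cases hj : j = i
      · by_cases hk : k' = i
        · rw [hj, hk, hrowi, hquz]
          simp [hH_def]
        · rw [hj, hrowi, hrow k' hk, hsy, hGu', dotProduct_single]
          simp [hH_def, hk]
      · by_cases hk : k' = i
        · rw [hk, hrow j hj, hrowi, hGu', single_dotProduct]
          simp [hH_def, hj]
        · rw [hrow j hj, hrow k' hk,
            show Gq *ᵥ Pi.single k' (1 : ℚ) = fun t => Gq t k' by
              rw [Matrix.mulVec_single]; funext t; simp,
            single_dotProduct]
          simp [hH_def, hj, hk, hGq, Matrix.map_apply]
    have hHdet : (H.det : ℚ) = 1 / p * (G.det : ℚ) * (1 / p) := by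
      rw [← det_cast H, hHmap, Matrix.det_mul, Matrix.det_mul, Matrix.det_transpose,
        hdetU, hdet]
    have hfinal : (p : ℤ) * (p : ℤ) ∣ G.det := by
      refine ⟨H.det, ?_⟩
      have h2 : (G.det : ℚ) = (((p : ℤ) * (p : ℤ) * H.det : ℤ) : ℚ) := by
        field_simp at hHdet
        rw [← hHdet]; push_cast; ring
      exact_mod_cast h2
    exact (Nat.prime_iff_prime_int.mp pp).not_unit (hd _ hfinal)
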